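/- Let k(v,u) be a measurable kernel on ℝ³×ℝ³ satisfying |k(v,u)| ≤ C₁ e^{-(u₀+v₀)/2} + C₁ (max{u₀,v₀}|u-v|)^{-1} e^{-|u-v|/4}, where u₀ = √(1+|u|²), v₀ = √(1+|v|²). Then for any γ ∈ ℝ there exists C > 0 such that ∫_{ℝ³} |k(v,u)| (1+u₀)^γ du ≤ C (1+v₀)^{γ-1} for all v ∈ ℝ³. -/

import Mathlib

open MeasureTheory Real Set Module
open scoped ENNReal

noncomputable def energy (v : EuclideanSpace ℝ (Fin 3)) : ℝ := Real.sqrt (1 + ‖v‖ ^ 2)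

lemma one_le_energy (v : EuclideanSpace ℝ (Fin 3)) : 1 ≤ energy v :=
  Real.one_le_sqrt.2 (by nlinarith [norm_nonneg v])

lemma norm_le_energy (v : EuclideanSpace ℝ (Fin 3)) : ‖v‖ ≤ energy v :=
  Real.le_sqrt_of_sq_le (by nlinarith)

lemma energy_le (v : EuclideanSpace ℝ (Fin 3)) : energy v ≤ 1 + ‖v‖ :=
  sqrt_one_add_norm_sq_le v

lemma energy_pos (v : EuclideanSpace ℝ (Fin 3)) : 0 < energy v :=
  lt_of_lt_of_le one_pos (one_le_energy v)

lemma energy_lip (u v : EuclideanSpace ℝ (Fin 3)) : energy u ≤ energy v + ‖u - v‖ := by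
  have hEv := norm_le_energy v
  have h0 : (0:ℝ) ≤ energy v + ‖u - v‖ := by
    have := energy_pos v; have := norm_nonneg (u - v); linarith
  have hu : ‖u‖ ≤ ‖v‖ + ‖u - v‖ := by
    have := norm_sub_norm_le u v; linarith
  have hsq : energy v ^ 2 = 1 + ‖v‖ ^ 2 := Real.sq_sqrt (by positivity)
  rw [energy, show energy v + ‖u - v‖ = Real.sqrt ((energy v + ‖u - v‖)^2) from
    (Real.sqrt_sq h0).symm]
  apply Real.sqrt_le_sqrt
  nlinarith [norm_nonneg u, norm_nonneg (u - v), norm_nonneg v]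

lemma poly_le_exp {q : ℝ} (hq : 1 ≤ q) {t : ℝ} (ht : 0 ≤ t) :
    (1 + t) ^ q ≤ (8 * q) ^ q * Real.exp (t / 8) := by
  have hq0 : 0 < q := lt_of_lt_of_le one_pos hq
  have h1 : 1 + t ≤ 8 * q * Real.exp (t / (8 * q)) := by
    have h2 := Real.add_one_le_exp (t / (8 * q))
    have h3 : 8 * q * (t / (8 * q)) = t := by field_simp
    nlinarith [mul_le_mul_of_nonneg_left h2 (by positivity : (0:ℝ) ≤ 8 * q)]
  calc (1 + t) ^ q ≤ (8 * q * Real.exp (t / (8 * q))) ^ q :=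
        Real.rpow_le_rpow (by linarith) h1 hq0.le
    _ = (8 * q) ^ q * Real.exp (t / 8) := by
        rw [Real.mul_rpow (by positivity) (Real.exp_pos _).le, ← Real.exp_mul]
        congr 1
        field_simp

lemma rpow_mul_exp_le {q t : ℝ} (hq : 1 ≤ q) (ht : 0 ≤ t) :
    (1 + t) ^ q * Real.exp (-t / 4) ≤ (8 * q) ^ q := by
  calc (1 + t) ^ q * Real.exp (-t / 4)
      ≤ (8 * q) ^ q * Real.exp (t / 8) * Real.exp (-t / 4) :=
        mul_le_mul_of_nonneg_right (poly_le_exp hq ht) (Real.exp_pos _).le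
    _ = (8 * q) ^ q * Real.exp (t / 8 + -t / 4) := by rw [mul_assoc, ← Real.exp_add]
    _ ≤ (8 * q) ^ q * 1 := by
        apply mul_le_mul_of_nonneg_left _ (by positivity)
        rw [Real.exp_le_one_iff]; linarith
    _ = (8 * q) ^ q := mul_one _

lemma weight_transfer (γ : ℝ) (u v : EuclideanSpace ℝ (Fin 3)) :
    (1 + energy u) ^ γ ≤ (1 + energy v) ^ γ * (1 + ‖u - v‖) ^ |γ| := by
  have hEu := one_le_energy u
  have hEv := one_le_energy v
  have hd : (0:ℝ) ≤ ‖u - v‖ := norm_nonneg _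
  have ha : (0:ℝ) < 1 + energy u := by linarith
  have hb : (0:ℝ) < 1 + energy v := by linarith
  have hdd : (0:ℝ) < 1 + ‖u - v‖ := by linarith
  have key1 : 1 + energy u ≤ (1 + energy v) * (1 + ‖u - v‖) := by
    have := energy_lip u v; nlinarith
  have key2 : 1 + energy v ≤ (1 + energy u) * (1 + ‖u - v‖) := by
    have := energy_lip v u; rw [norm_sub_rev] at this; nlinarith
  rcases le_or_gt 0 γ with h | h
  · rw [abs_of_nonneg h, ← Real.mul_rpow hb.le hdd.le]
    exact Real.rpow_le_rpow ha.le key1 h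
  · rw [abs_of_neg h]
    obtain ⟨p, hp0, rfl⟩ : ∃ p, 0 ≤ p ∧ γ = -p := ⟨-γ, by linarith, by ring⟩
    have key : (1 + energy v) ^ p ≤ (1 + energy u) ^ p * (1 + ‖u - v‖) ^ p := by
      rw [← Real.mul_rpow ha.le hdd.le]
      exact Real.rpow_le_rpow hb.le key2 hp0
    rw [neg_neg, Real.rpow_neg ha.le, Real.rpow_neg hb.le, ← div_eq_inv_mul,
      le_div_iff₀ (Real.rpow_pos_of_pos hb p), inv_mul_le_iff₀ (Real.rpow_pos_of_pos ha p)]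
    exact key

lemma bound_A1 (γ : ℝ) (u : EuclideanSpace ℝ (Fin 3)) :
    Real.exp (-energy u / 2) * (1 + energy u) ^ γ ≤
      (8 * (|γ| + 5)) ^ (|γ| + 5) * (1 + ‖u‖) ^ (-(4:ℝ)) := by
  set q : ℝ := |γ| + 5 with hq
  set M : ℝ := (8 * q) ^ q with hM
  have hq1 : (1:ℝ) ≤ q := by rw [hq]; have := abs_nonneg γ; linarith
  have hE := one_le_energy u
  have hn := norm_le_energy u
  have hn0 := norm_nonneg u
  have ha : (0:ℝ) < 1 + energy u := by linarith
  have hb : (0:ℝ) < 1 + ‖u‖ := by linarith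
  have h1 : (1 + energy u) ^ γ * (1 + ‖u‖) ^ (4:ℝ) ≤ M * Real.exp (energy u / 2) := by
    calc (1 + energy u) ^ γ * (1 + ‖u‖) ^ (4:ℝ)
        ≤ (1 + energy u) ^ |γ| * (1 + energy u) ^ (4:ℝ) := by
          apply mul_le_mul (Real.rpow_le_rpow_of_exponent_le (by linarith) (le_abs_self γ))
            (Real.rpow_le_rpow hb.le (by linarith) (by norm_num))
            (by positivity) (by positivity)
      _ = (1 + energy u) ^ (|γ| + 4) := (Real.rpow_add ha _ _).symm
      _ ≤ (1 + energy u) ^ q := Real.rpow_le_rpow_of_exponent_le (by linarith) (by rw [hq]; linarith)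
      _ ≤ M * Real.exp (energy u / 8) := poly_le_exp hq1 (by linarith)
      _ ≤ M * Real.exp (energy u / 2) := by
          apply mul_le_mul_of_nonneg_left (Real.exp_le_exp.2 (by linarith)) (by positivity)
  rw [Real.rpow_neg hb.le, ← div_eq_mul_inv, le_div_iff₀ (Real.rpow_pos_of_pos hb _), mul_assoc]
  calc Real.exp (-energy u / 2) * ((1 + energy u) ^ γ * (1 + ‖u‖) ^ (4:ℝ))
      ≤ Real.exp (-energy u / 2) * (M * Real.exp (energy u / 2)) :=
        mul_le_mul_of_nonneg_left h1 (Real.exp_pos _).le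
    _ = M * (Real.exp (-energy u / 2) * Real.exp (energy u / 2)) := by ring
    _ = M := by rw [← Real.exp_add, show -energy u / 2 + energy u / 2 = 0 by ring, Real.exp_zero, mul_one]

lemma bound_A2 (γ V : ℝ) (hV : 1 ≤ V) :
    Real.exp (-V / 2) ≤ (8 * (|γ| + 5)) ^ (|γ| + 5) * (1 + V) ^ (γ - 1) := by
  set q : ℝ := |γ| + 5 with hq
  set M : ℝ := (8 * q) ^ q with hM
  have hq1 : (1:ℝ) ≤ q := by rw [hq]; have := abs_nonneg γ; linarith
  have hb : (0:ℝ) < 1 + V := by linarith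
  have h1 : (1 + V) ^ (1 - γ) ≤ M * Real.exp (V / 2) := by
    calc (1 + V) ^ (1 - γ)
        ≤ (1 + V) ^ q := Real.rpow_le_rpow_of_exponent_le (by linarith)
          (by rw [hq]; have := neg_le_abs γ; linarith)
      _ ≤ M * Real.exp (V / 8) := poly_le_exp hq1 (by linarith)
      _ ≤ M * Real.exp (V / 2) := by
          apply mul_le_mul_of_nonneg_left (Real.exp_le_exp.2 (by linarith)) (by positivity)
  rw [show γ - 1 = -(1 - γ) by ring, Real.rpow_neg hb.le, ← div_eq_mul_inv,
    le_div_iff₀ (Real.rpow_pos_of_pos hb _)]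
  calc Real.exp (-V / 2) * (1 + V) ^ (1 - γ)
      ≤ Real.exp (-V / 2) * (M * Real.exp (V / 2)) :=
        mul_le_mul_of_nonneg_left h1 (Real.exp_pos _).le
    _ = M * (Real.exp (-V / 2) * Real.exp (V / 2)) := by ring
    _ = M := by rw [← Real.exp_add, show -V / 2 + V / 2 = 0 by ring, Real.exp_zero, mul_one]


lemma bound_A3 (γ : ℝ) {d : ℝ} (hd : 0 ≤ d) :
    Real.exp (-d / 4) * (1 + d) ^ |γ| ≤ (8 * (|γ| + 5)) ^ (|γ| + 5) * (1 + d) ^ (-(4:ℝ)) := by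
  set q : ℝ := |γ| + 5 with hq
  set M : ℝ := (8 * q) ^ q with hM
  have hq1 : (1:ℝ) ≤ q := by rw [hq]; have := abs_nonneg γ; linarith
  have hb : (0:ℝ) < 1 + d := by linarith
  rw [Real.rpow_neg hb.le, ← div_eq_mul_inv, le_div_iff₀ (Real.rpow_pos_of_pos hb _), mul_assoc]
  calc Real.exp (-d / 4) * ((1 + d) ^ |γ| * (1 + d) ^ (4:ℝ))
      = (1 + d) ^ (|γ| + (4:ℝ)) * Real.exp (-d / 4) := by rw [Real.rpow_add hb]; ring
    _ ≤ (1 + d) ^ q * Real.exp (-d / 4) :=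
        mul_le_mul_of_nonneg_right
          (Real.rpow_le_rpow_of_exponent_le (by linarith) (by rw [hq]; linarith))
          (Real.exp_pos _).le
    _ ≤ M := rpow_mul_exp_le hq1 hd


local notation "E3" => EuclideanSpace ℝ (Fin 3)

lemma finrank_E3 : (finrank ℝ (EuclideanSpace ℝ (Fin 3)) : ℝ) = 3 := by
  rw [finrank_euclideanSpace_fin]; norm_num

lemma int_one_add_norm : Integrable (fun u : E3 => (1 + ‖u‖) ^ (-(4:ℝ))) := by
  apply integrable_one_add_norm
  rw [finrank_E3]; norm_num

lemma finite_lintegral_inv_norm_ball :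
    (∫⁻ w in Metric.ball (0:E3) 1, ENNReal.ofReal ‖w‖⁻¹) < ∞ := by
  set μ := (volume : Measure E3).restrict (Metric.ball 0 1) with hμ
  have hmeas : Measurable fun w : E3 => ‖w‖⁻¹ := measurable_norm.inv
  rw [lintegral_eq_lintegral_meas_le μ
    (Filter.Eventually.of_forall fun w => by positivity) hmeas.aemeasurable]
  have hsplit : ∫⁻ t in Ioi (0:ℝ), μ {a : E3 | t ≤ ‖a‖⁻¹} ≤
      (∫⁻ t in Ioc (0:ℝ) 1, μ {a : E3 | t ≤ ‖a‖⁻¹}) +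
      ∫⁻ t in Ioi (1:ℝ), μ {a : E3 | t ≤ ‖a‖⁻¹} :=
    le_trans (lintegral_mono_set Ioi_subset_Ioc_union_Ioi) (lintegral_union_le _ _ _)
  refine lt_of_le_of_lt hsplit (ENNReal.add_lt_top.2 ⟨?_, ?_⟩)
  · calc ∫⁻ t in Ioc (0:ℝ) 1, μ {a : E3 | t ≤ ‖a‖⁻¹}
        ≤ ∫⁻ _ in Ioc (0:ℝ) 1, volume (Metric.ball (0:E3) 1) :=
          lintegral_mono fun t => by
            rw [hμ, Measure.restrict_apply' measurableSet_ball]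
            exact measure_mono Set.inter_subset_right
      _ = volume (Metric.ball (0:E3) 1) * volume (Ioc (0:ℝ) 1) := setLIntegral_const _ _
      _ < ∞ := ENNReal.mul_lt_top measure_ball_lt_top (by simp)
  · have hb : ∀ t ∈ Ioi (1:ℝ), μ {a : E3 | t ≤ ‖a‖⁻¹} ≤
        ENNReal.ofReal (t ^ (-3:ℝ)) * volume (Metric.ball (0:E3) 1) := by
      intro t ht
      have ht1 : (1:ℝ) < t := ht
      have ht0 : (0:ℝ) < t := lt_trans one_pos ht1
      have hsub : {a : E3 | t ≤ ‖a‖⁻¹} ⊆ Metric.closedBall 0 t⁻¹ := by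
        intro a ha
        simp only [mem_setOf_eq] at ha
        rw [Metric.mem_closedBall, dist_zero_right]
        rcases eq_or_lt_of_le (norm_nonneg a) with h0 | h0
        · rw [← h0] at ha ⊢; positivity
        · have h2 : ‖a‖⁻¹ * ‖a‖ = 1 := inv_mul_cancel₀ (ne_of_gt h0)
          have h3 : t⁻¹ * t = 1 := inv_mul_cancel₀ (ne_of_gt ht0)
          nlinarith [mul_le_mul_of_nonneg_right ha (le_of_lt h0)]
      calc μ {a : E3 | t ≤ ‖a‖⁻¹} ≤ volume (Metric.closedBall (0:E3) t⁻¹) := by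
            rw [hμ, Measure.restrict_apply' measurableSet_ball]
            exact measure_mono (Set.inter_subset_left.trans hsub)
        _ = ENNReal.ofReal (t⁻¹ ^ finrank ℝ (EuclideanSpace ℝ (Fin 3))) *
              volume (Metric.ball (0:E3) 1) :=
            Measure.addHaar_closedBall _ _ (by positivity)
        _ = ENNReal.ofReal (t ^ (-3:ℝ)) * volume (Metric.ball (0:E3) 1) := by
            congr 1
            rw [finrank_euclideanSpace_fin]
            rw [Real.rpow_neg ht0.le, show ((3:ℝ)) = ((3:ℕ):ℝ) by norm_num,
              Real.rpow_natCast, inv_pow]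
    calc ∫⁻ t in Ioi (1:ℝ), μ {a : E3 | t ≤ ‖a‖⁻¹}
        ≤ ∫⁻ t in Ioi (1:ℝ), ENNReal.ofReal (t ^ (-3:ℝ)) * volume (Metric.ball (0:E3) 1) :=
          setLIntegral_mono' measurableSet_Ioi hb
      _ = (∫⁻ t in Ioi (1:ℝ), ENNReal.ofReal (t ^ (-3:ℝ))) * volume (Metric.ball (0:E3) 1) :=
          lintegral_mul_const' _ _ measure_ball_lt_top.ne
      _ < ∞ := ENNReal.mul_lt_top
          ((integrableOn_Ioi_rpow_of_lt (by norm_num) one_pos).setLIntegral_lt_top)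
          measure_ball_lt_top

lemma int_H : Integrable (fun w : EuclideanSpace ℝ (Fin 3) => ‖w‖⁻¹ * (1 + ‖w‖) ^ (-(4:ℝ))) := by
  constructor
  · apply Measurable.aestronglyMeasurable
    fun_prop
  · rw [hasFiniteIntegral_iff_ofReal (ae_of_all _ fun w => by positivity)]
    rw [← lintegral_add_compl (μ := volume)
      (fun w : EuclideanSpace ℝ (Fin 3) => ENNReal.ofReal (‖w‖⁻¹ * (1 + ‖w‖) ^ (-(4:ℝ))))
      (A := Metric.ball 0 1) measurableSet_ball]
    apply ENNReal.add_lt_top.2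
    constructor
    · refine lt_of_le_of_lt (lintegral_mono fun w => ?_) finite_lintegral_inv_norm_ball
      apply ENNReal.ofReal_le_ofReal
      calc ‖w‖⁻¹ * (1 + ‖w‖) ^ (-(4:ℝ)) ≤ ‖w‖⁻¹ * 1 := by
            apply mul_le_mul_of_nonneg_left _ (by positivity)
            exact Real.rpow_le_one_of_one_le_of_nonpos (by linarith [norm_nonneg w]) (by norm_num)
        _ = ‖w‖⁻¹ := mul_one _
    · have hfin : (∫⁻ w : EuclideanSpace ℝ (Fin 3),
          ENNReal.ofReal ((1 + ‖w‖) ^ (-(4:ℝ)))) < ∞ := by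
        apply finite_integral_one_add_norm
        rw [finrank_euclideanSpace_fin]; norm_num
      refine lt_of_le_of_lt (le_trans (setLIntegral_mono' measurableSet_ball.compl
        (fun w hw => ?_)) (setLIntegral_le_lintegral _ _)) hfin
      apply ENNReal.ofReal_le_ofReal
      have h1 : (1:ℝ) ≤ ‖w‖ := by
        simp only [Set.mem_compl_iff, Metric.mem_ball, dist_zero_right, not_lt] at hw
        exact hw
      calc ‖w‖⁻¹ * (1 + ‖w‖) ^ (-(4:ℝ)) ≤ 1 * (1 + ‖w‖) ^ (-(4:ℝ)) := by
            apply mul_le_mul_of_nonneg_right _ (by positivity)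
            exact inv_le_one_of_one_le₀ h1
        _ = _ := one_mul _

theorem kernel_weighted_integral
    (k : EuclideanSpace ℝ (Fin 3) → EuclideanSpace ℝ (Fin 3) → ℝ)
    (hk : Measurable (Function.uncurry k)) (C₁ : ℝ) (hC₁ : 0 < C₁)
    (hbound : ∀ v u : EuclideanSpace ℝ (Fin 3), u ≠ v →
      |k v u| ≤ C₁ * Real.exp (-(energy u + energy v) / 2) +
        C₁ / (max (energy u) (energy v) * ‖u - v‖) * Real.exp (-‖u - v‖ / 4))
    (γ : ℝ) :
    ∃ C > 0, ∀ v : EuclideanSpace ℝ (Fin 3),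
      (∫ u, |k v u| * (1 + energy u) ^ γ) ≤ C * (1 + energy v) ^ (γ - 1) := by
  set M : ℝ := (8 * (|γ| + 5)) ^ (|γ| + 5) with hM
  have hM0 : 0 < M := Real.rpow_pos_of_pos (by positivity) _
  set I₁ : ℝ := ∫ u : EuclideanSpace ℝ (Fin 3), (1 + ‖u‖) ^ (-(4:ℝ)) with hI₁
  set I₂ : ℝ := ∫ w : EuclideanSpace ℝ (Fin 3), ‖w‖⁻¹ * (1 + ‖w‖) ^ (-(4:ℝ)) with hI₂
  have hI₁0 : 0 ≤ I₁ := integral_nonneg fun u => by positivity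
  have hI₂0 : 0 ≤ I₂ := integral_nonneg fun w => by positivity
  refine ⟨C₁ * M * M * I₁ + 2 * C₁ * M * I₂ + 1, by positivity, fun v => ?_⟩
  have hV1 : 1 ≤ energy v := one_le_energy v
  have hVpos : (0:ℝ) < 1 + energy v := by linarith
  have hVpow : (0:ℝ) ≤ (1 + energy v) ^ (γ - 1) := Real.rpow_nonneg hVpos.le _
  set g : EuclideanSpace ℝ (Fin 3) → ℝ := fun u =>
    C₁ * M * M * (1 + energy v) ^ (γ - 1) * (1 + ‖u‖) ^ (-(4:ℝ)) +
    2 * C₁ * M * (1 + energy v) ^ (γ - 1) * (‖u - v‖⁻¹ * (1 + ‖u - v‖) ^ (-(4:ℝ))) with hg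
  have hgint : Integrable g := by
    apply Integrable.add (int_one_add_norm.const_mul _)
    exact ((int_H.comp_sub_right v).const_mul _)
  have hpt : ∀ u : EuclideanSpace ℝ (Fin 3), u ≠ v →
      |k v u| * (1 + energy u) ^ γ ≤ g u := by
    intro u hu
    have hEu := one_le_energy u
    have hUpos : (0:ℝ) < 1 + energy u := by linarith
    have hd : (0:ℝ) < ‖u - v‖ := by
      rw [norm_pos_iff]; exact sub_ne_zero.mpr hu
    have hrp : (0:ℝ) ≤ (1 + energy u) ^ γ := Real.rpow_nonneg hUpos.le _
    calc |k v u| * (1 + energy u) ^ γ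
        ≤ (C₁ * Real.exp (-(energy u + energy v) / 2) +
            C₁ / (max (energy u) (energy v) * ‖u - v‖) * Real.exp (-‖u - v‖ / 4)) *
            (1 + energy u) ^ γ :=
          mul_le_mul_of_nonneg_right (hbound v u hu) hrp
      _ = C₁ * (Real.exp (-energy u / 2) * (1 + energy u) ^ γ * Real.exp (-energy v / 2)) +
          C₁ / (max (energy u) (energy v) * ‖u - v‖) *
            (Real.exp (-‖u - v‖ / 4) * (1 + energy u) ^ γ) := by
          rw [show -(energy u + energy v) / 2 = -energy u / 2 + -energy v / 2 by ring,
            Real.exp_add]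
          ring
      _ ≤ g u := ?_
    apply add_le_add
    · -- first term
      calc C₁ * (Real.exp (-energy u / 2) * (1 + energy u) ^ γ * Real.exp (-energy v / 2))
          ≤ C₁ * ((M * (1 + ‖u‖) ^ (-(4:ℝ))) * (M * (1 + energy v) ^ (γ - 1))) := by
            apply mul_le_mul_of_nonneg_left _ hC₁.le
            exact mul_le_mul (bound_A1 γ u) (bound_A2 γ _ hV1) (Real.exp_pos _).le
              (by positivity)
        _ = C₁ * M * M * (1 + energy v) ^ (γ - 1) * (1 + ‖u‖) ^ (-(4:ℝ)) := by ring
    · -- second term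
      have hmax : (1 + energy v) / 2 * ‖u - v‖ ≤ max (energy u) (energy v) * ‖u - v‖ :=
        mul_le_mul_of_nonneg_right (le_trans (by linarith) (le_max_right _ _)) hd.le
      have hstep1 : C₁ / (max (energy u) (energy v) * ‖u - v‖) ≤
          C₁ / ((1 + energy v) / 2 * ‖u - v‖) :=
        div_le_div_of_nonneg_left hC₁.le (by positivity) hmax
      have hstep2 : Real.exp (-‖u - v‖ / 4) * (1 + energy u) ^ γ ≤
          (1 + energy v) ^ γ * (M * (1 + ‖u - v‖) ^ (-(4:ℝ))) := by
        calc Real.exp (-‖u - v‖ / 4) * (1 + energy u) ^ γ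
            ≤ Real.exp (-‖u - v‖ / 4) * ((1 + energy v) ^ γ * (1 + ‖u - v‖) ^ |γ|) :=
              mul_le_mul_of_nonneg_left (weight_transfer γ u v) (Real.exp_pos _).le
          _ = (1 + energy v) ^ γ * (Real.exp (-‖u - v‖ / 4) * (1 + ‖u - v‖) ^ |γ|) := by ring
          _ ≤ (1 + energy v) ^ γ * (M * (1 + ‖u - v‖) ^ (-(4:ℝ))) :=
              mul_le_mul_of_nonneg_left (bound_A3 γ hd.le) (by positivity)
      calc C₁ / (max (energy u) (energy v) * ‖u - v‖) *
            (Real.exp (-‖u - v‖ / 4) * (1 + energy u) ^ γ)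
          ≤ C₁ / ((1 + energy v) / 2 * ‖u - v‖) *
            ((1 + energy v) ^ γ * (M * (1 + ‖u - v‖) ^ (-(4:ℝ)))) := by
            apply mul_le_mul hstep1 hstep2 (by positivity) (by positivity)
        _ = 2 * C₁ * M * (1 + energy v) ^ (γ - 1) *
            (‖u - v‖⁻¹ * (1 + ‖u - v‖) ^ (-(4:ℝ))) := by
            rw [Real.rpow_sub hVpos, Real.rpow_one]
            field_simp
  have hae : (fun u => |k v u| * (1 + energy u) ^ γ) ≤ᵐ[volume] g := by
    have h0 : ∀ᵐ u : EuclideanSpace ℝ (Fin 3), u ≠ v := by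
      rw [ae_iff]
      simp only [not_not, Set.setOf_eq_eq_singleton]
      exact measure_singleton v
    filter_upwards [h0] with u hu using hpt u hu
  calc (∫ u, |k v u| * (1 + energy u) ^ γ) ≤ ∫ u, g u :=
        integral_mono_of_nonneg (ae_of_all _ fun u => mul_nonneg (abs_nonneg _) (Real.rpow_nonneg (by linarith [one_le_energy u]) _)) hgint hae
    _ = C₁ * M * M * (1 + energy v) ^ (γ - 1) * I₁ +
        2 * C₁ * M * (1 + energy v) ^ (γ - 1) * I₂ := by
        rw [hg, integral_add (int_one_add_norm.const_mul _)
          ((int_H.comp_sub_right v).const_mul _), integral_const_mul, integral_const_mul,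
          integral_sub_right_eq_self
            (fun w : EuclideanSpace ℝ (Fin 3) => ‖w‖⁻¹ * (1 + ‖w‖) ^ (-(4:ℝ))) v]
    _ ≤ (C₁ * M * M * I₁ + 2 * C₁ * M * I₂ + 1) * (1 + energy v) ^ (γ - 1) := by
        nlinarith [hVpow, hM0, hC₁, hI₁0, hI₂0]
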